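/- Helstrom–Holevo: for a prior p ∈ [0,1] and density matrices ρ₀, ρ₁, the minimum average error probability of binary discrimination equals min_{0≤Λ≤I} ( p Tr(Λρ₀) + (1−p) Tr((I−Λ)ρ₁) ) = (1/2)(1 − ‖pρ₀ − (1−p)ρ₁‖₁), where ‖·‖₁ is the trace norm. -/

import Mathlib

open Matrix
open scoped ComplexOrder

/-- The trace norm `‖A‖₁ = Tr √(AᴴA)`. -/
noncomputable def traceNorm {d : Type*} [Fintype d] [DecidableEq d]
    (A : Matrix d d ℂ) : ℝ :=
  ((Matrix.posSemidef_conjTranspose_mul_self A).1.eigenvectorUnitary.1 *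
    diagonal (((↑) : ℝ → ℂ) ∘ (√·) ∘ (Matrix.posSemidef_conjTranspose_mul_self A).1.eigenvalues) *
    (star (Matrix.posSemidef_conjTranspose_mul_self A).1.eigenvectorUnitary : Matrix d d ℂ)).trace.re

/-- Minimum average error probability of binary state discrimination with prior `(p, 1−p)`. -/
noncomputable def perr {d : ℕ} (p : ℝ) (ρ₀ ρ₁ : Matrix (Fin d) (Fin d) ℂ) : ℝ :=
  sInf {x : ℝ | ∃ Λ : Matrix (Fin d) (Fin d) ℂ, Λ.PosSemidef ∧ (1 - Λ).PosSemidef ∧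
    x = p * ((Λ * ρ₀).trace).re + (1 - p) * (((1 - Λ) * ρ₁).trace).re}


namespace HHaux
variable {n : Type*} [Fintype n] [DecidableEq n]

noncomputable def mcfc {A : Matrix n n ℂ} (hA : A.IsHermitian) (f : ℝ → ℝ) : Matrix n n ℂ :=
  (hA.eigenvectorUnitary : Matrix n n ℂ) *
    Matrix.diagonal (fun i => (f (hA.eigenvalues i) : ℂ)) *
    star (hA.eigenvectorUnitary : Matrix n n ℂ)

variable {A : Matrix n n ℂ} (hA : A.IsHermitian) (f g : ℝ → ℝ)

lemma star_mul_selfU : star (hA.eigenvectorUnitary : Matrix n n ℂ) * (hA.eigenvectorUnitary : Matrix n n ℂ) = 1 :=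
  mem_unitaryGroup_iff'.mp hA.eigenvectorUnitary.2

lemma mul_starU : (hA.eigenvectorUnitary : Matrix n n ℂ) * star (hA.eigenvectorUnitary : Matrix n n ℂ) = 1 :=
  mem_unitaryGroup_iff.mp hA.eigenvectorUnitary.2

lemma conj_mul_conj (U X Y : Matrix n n ℂ) (h : star U * U = 1) :
    (U * X * star U) * (U * Y * star U) = U * (X * Y) * star U := by
  rw [mul_assoc (U * X) (star U) (U * Y * star U), ← mul_assoc (star U) (U * Y) (star U),
    ← mul_assoc (star U) U Y, h, one_mul, ← mul_assoc, mul_assoc U X Y]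

lemma mcfc_mul : mcfc hA f * mcfc hA g = mcfc hA (fun t => f t * g t) := by
  rw [mcfc, mcfc, mcfc, conj_mul_conj _ _ _ (star_mul_selfU hA), diagonal_mul_diagonal]
  push_cast
  rfl

lemma trace_mcfc : (mcfc hA f).trace = ∑ i, (f (hA.eigenvalues i) : ℂ) := by
  rw [mcfc, trace_mul_cycle, star_mul_selfU, one_mul, trace_diagonal]

lemma posSemidef_mcfc (hf : ∀ x : ℝ, 0 ≤ f x) : (mcfc hA f).PosSemidef := by
  have h : (Matrix.diagonal (fun i => (f (hA.eigenvalues i) : ℂ))).PosSemidef :=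
    posSemidef_diagonal_iff.mpr fun i => by exact_mod_cast hf _
  simpa [mcfc, Matrix.star_eq_conjTranspose] using
    h.mul_mul_conjTranspose_same (hA.eigenvectorUnitary : Matrix n n ℂ)

lemma mcfc_id : mcfc hA (fun t => t) = A := by
  exact hA.spectral_theorem.symm

lemma mcfc_one : mcfc hA (fun _ => 1) = 1 := by
  simp [mcfc, mul_starU]

lemma mcfc_add : mcfc hA f + mcfc hA g = mcfc hA (fun t => f t + g t) := by
  simp only [mcfc, ← Matrix.add_mul, ← Matrix.mul_add, diagonal_add]
  push_cast
  rfl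

lemma mcfc_sub : mcfc hA f - mcfc hA g = mcfc hA (fun t => f t - g t) := by
  rw [sub_eq_iff_eq_add, mcfc_add]
  norm_num

lemma psd_diag_nonneg {B : Matrix n n ℂ} (hB : B.PosSemidef) (i : n) : 0 ≤ B i i := by
  exact hB.diag_nonneg

lemma psd_trace_re_nonneg {B : Matrix n n ℂ} (hB : B.PosSemidef) : 0 ≤ B.trace.re := by
  rw [Matrix.trace, Complex.re_sum]
  exact Finset.sum_nonneg fun i _ => (Complex.le_def.mp (psd_diag_nonneg hB i)).1

lemma mcfc_sqrt_sq {B : Matrix n n ℂ} (hB : B.PosSemidef) :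
    mcfc hB.1 Real.sqrt * mcfc hB.1 Real.sqrt = B := by
  rw [mcfc_mul]
  conv_rhs => rw [← mcfc_id hB.1]
  unfold mcfc
  congr 3
  funext i
  simp only [Real.mul_self_sqrt (hB.eigenvalues_nonneg i)]

open scoped MatrixOrder Matrix.Norms.L2Operator in
lemma psd_sq_unique {P Q : Matrix n n ℂ} (hP : P.PosSemidef) (hQ : Q.PosSemidef)
    (h : P * P = Q * Q) : P = Q :=
  (CFC.mul_self_eq_mul_self_iff P Q hP.nonneg hQ.nonneg).mp h

lemma trace_mul_psd_nonneg {B C : Matrix n n ℂ} (hB : B.PosSemidef) (hC : C.PosSemidef) :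
    0 ≤ ((B * C).trace).re := by
  have h1 : B * C = B * (mcfc hC.1 Real.sqrt * mcfc hC.1 Real.sqrt) := by rw [mcfc_sqrt_sq hC]
  have h2 : ((B * C).trace) = ((mcfc hC.1 Real.sqrt * B * mcfc hC.1 Real.sqrt).trace) := by
    rw [h1, ← mul_assoc, trace_mul_cycle]
  rw [h2]
  have : (mcfc hC.1 Real.sqrt * B * mcfc hC.1 Real.sqrt).PosSemidef := by
    have := hB.mul_mul_conjTranspose_same (mcfc hC.1 Real.sqrt)
    rwa [(posSemidef_mcfc hC.1 _ Real.sqrt_nonneg).1] at this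
  exact psd_trace_re_nonneg this

end HHaux

open HHaux in
/-- Helstrom–Holevo theorem:
`min_{0≤Λ≤I} ( p Tr(Λρ₀) + (1−p) Tr((I−Λ)ρ₁) ) = (1/2)(1 − ‖pρ₀ − (1−p)ρ₁‖₁)`. -/
theorem helstrom_holevo {d : ℕ} (p : ℝ) (hp0 : 0 ≤ p) (hp1 : p ≤ 1)
    (ρ₀ ρ₁ : Matrix (Fin d) (Fin d) ℂ)
    (h₀ : ρ₀.PosSemidef) (h₀t : ρ₀.trace = 1)
    (h₁ : ρ₁.PosSemidef) (h₁t : ρ₁.trace = 1) :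
    perr p ρ₀ ρ₁ = (1 / 2) * (1 - traceNorm (p • ρ₀ - (1 - p) • ρ₁)) := by
  classical
  unfold perr traceNorm
  set Δ : Matrix (Fin d) (Fin d) ℂ := p • ρ₀ - (1 - p) • ρ₁ with hΔdef
  have hΔ : Δ.IsHermitian := by
    rw [Matrix.IsHermitian, conjTranspose_sub, conjTranspose_smul, conjTranspose_smul,
      h₀.1, h₁.1]
    simp
    exact hΔdef.symm
  set μ : Fin d → ℝ := hΔ.eigenvalues with hμ
  set N : ℝ := ∑ i, max (-(μ i)) 0 with hN
  -- trace of Δ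
  have htr : Δ.trace = ((2 * p - 1 : ℝ) : ℂ) := by
    rw [hΔdef, trace_sub, trace_smul, trace_smul, h₀t, h₁t]
    push_cast [Complex.real_smul]
    ring
  have hSum : ∑ i, μ i = 2 * p - 1 := by
    have h1 : (mcfc hΔ (fun t => t)).trace = ∑ i, ((μ i : ℝ) : ℂ) := trace_mcfc hΔ _
    rw [mcfc_id hΔ, htr] at h1
    exact_mod_cast h1.symm
  -- trace norm
  have hsq : (mcfc hΔ (fun t => |t|)) ^ 2 = Δᴴ * Δ := by
    rw [pow_two, mcfc_mul, hΔ.eq,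
      show (fun t : ℝ => |t| * |t|) = fun t : ℝ => t * t from funext fun t => abs_mul_abs_self t,
      ← mcfc_mul hΔ (fun t => t) (fun t => t), mcfc_id hΔ]
  have habs : mcfc (Matrix.posSemidef_conjTranspose_mul_self Δ).1 Real.sqrt = mcfc hΔ (fun t => |t|) :=
    psd_sq_unique (posSemidef_mcfc _ _ Real.sqrt_nonneg) (posSemidef_mcfc hΔ _ (fun x => abs_nonneg x))
      (by rw [mcfc_sqrt_sq (Matrix.posSemidef_conjTranspose_mul_self Δ), ← pow_two, hsq])
  have hTN : ((Matrix.posSemidef_conjTranspose_mul_self Δ).1.eigenvectorUnitary.1 *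
      diagonal (((↑) : ℝ → ℂ) ∘ (√·) ∘ (Matrix.posSemidef_conjTranspose_mul_self Δ).1.eigenvalues) *
      (star (Matrix.posSemidef_conjTranspose_mul_self Δ).1.eigenvectorUnitary :
        Matrix (Fin d) (Fin d) ℂ)).trace.re = ∑ i, |μ i| := by
    change (mcfc (Matrix.posSemidef_conjTranspose_mul_self Δ).1 Real.sqrt).trace.re = _
    rw [habs, trace_mcfc, Complex.re_sum]
    simp [hμ]
  -- positive and negative parts
  set Pm : Matrix (Fin d) (Fin d) ℂ := mcfc hΔ (fun t => max t 0) with hPm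
  set Mm : Matrix (Fin d) (Fin d) ℂ := mcfc hΔ (fun t => max (-t) 0) with hMm
  have hPMdec : Δ = Pm - Mm := by
    rw [hPm, hMm, mcfc_sub hΔ (fun t => max t 0) (fun t => max (-t) 0),
      show (fun t : ℝ => max t 0 - max (-t) 0) = fun t : ℝ => t from
        funext fun t => max_zero_sub_max_neg_zero_eq_self t, mcfc_id hΔ]
  have hPpsd : Pm.PosSemidef := posSemidef_mcfc hΔ _ (fun x => le_max_right _ _)
  have hMpsd : Mm.PosSemidef := posSemidef_mcfc hΔ _ (fun x => le_max_right _ _)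
  have hMtr : Mm.trace.re = N := by
    rw [hMm, trace_mcfc, Complex.re_sum]
    simp [hN, hμ]
  -- rewriting of objective
  have hx : ∀ Λ : Matrix (Fin d) (Fin d) ℂ,
      p * ((Λ * ρ₀).trace).re + (1 - p) * (((1 - Λ) * ρ₁).trace).re
        = ((Λ * Δ).trace).re + (1 - p) := by
    intro Λ
    have h1 : Λ * Δ = p • (Λ * ρ₀) - (1 - p) • (Λ * ρ₁) := by
      rw [hΔdef, Matrix.mul_sub, Matrix.mul_smul, Matrix.mul_smul]
    have h2 : (1 - Λ) * ρ₁ = ρ₁ - Λ * ρ₁ := by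
      rw [Matrix.sub_mul, Matrix.one_mul]
    rw [h1, h2]
    simp only [trace_sub, trace_smul, h₁t, Complex.sub_re, Complex.one_re,
      Complex.real_smul, Complex.mul_re, Complex.ofReal_re, Complex.ofReal_im]
    ring
  -- lower bound
  have hLB : ∀ Λ : Matrix (Fin d) (Fin d) ℂ, Λ.PosSemidef → (1 - Λ).PosSemidef →
      -N ≤ ((Λ * Δ).trace).re := by
    intro Λ hΛ hΛ'
    have e1 : Λ * Δ = Λ * Pm - Λ * Mm := by rw [hPMdec, Matrix.mul_sub]
    have e2 : (1 - Λ) * Mm = Mm - Λ * Mm := by rw [Matrix.sub_mul, Matrix.one_mul]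
    have n1 : 0 ≤ ((Λ * Pm).trace).re := trace_mul_psd_nonneg hΛ hPpsd
    have n2 : 0 ≤ (((1 - Λ) * Mm).trace).re := trace_mul_psd_nonneg hΛ' hMpsd
    rw [e2, trace_sub] at n2
    rw [e1, trace_sub]
    simp only [Complex.sub_re] at n2 ⊢
    rw [hMtr] at n2
    linarith
  -- the optimal measurement
  set Λs : Matrix (Fin d) (Fin d) ℂ := mcfc hΔ (fun t => if t < 0 then 1 else 0) with hΛs
  have hΛspsd : Λs.PosSemidef := posSemidef_mcfc hΔ _ (fun x => by positivity)
  have hΛs'psd : ((1 : Matrix (Fin d) (Fin d) ℂ) - Λs).PosSemidef := by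
    have h1 : mcfc hΔ (fun t => 1 - (if t < 0 then 1 else 0)) = 1 - Λs := by
      rw [← mcfc_sub hΔ (fun _ => 1) (fun t => if t < 0 then 1 else 0), mcfc_one, hΛs]
    exact h1 ▸ posSemidef_mcfc hΔ _ (fun x => by split_ifs <;> norm_num)
  have hval : ((Λs * Δ).trace).re = -N := by
    have e1 : Λs * Δ = mcfc hΔ (fun t => (if t < 0 then 1 else 0) * t) := by
      rw [← mcfc_mul hΔ (fun t => if t < 0 then 1 else 0) (fun t => t), mcfc_id hΔ, hΛs]
    rw [e1, trace_mcfc, Complex.re_sum, hN, ← Finset.sum_neg_distrib, ← hμ]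
    refine Finset.sum_congr rfl (fun i _ => ?_)
    rcases lt_or_ge (μ i) 0 with h | h
    · simp [h, max_eq_left (by linarith : (0:ℝ) ≤ -μ i)]
    · simp [not_lt.mpr h, max_eq_right (by linarith : -μ i ≤ (0:ℝ))]
  -- compute the infimum
  set S := {x : ℝ | ∃ Λ : Matrix (Fin d) (Fin d) ℂ, Λ.PosSemidef ∧ (1 - Λ).PosSemidef ∧
      x = p * ((Λ * ρ₀).trace).re + (1 - p) * (((1 - Λ) * ρ₁).trace).re} with hSdef
  have hmem : ((1 - p) - N) ∈ S := by
    refine ⟨Λs, hΛspsd, hΛs'psd, ?_⟩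
    rw [hx Λs, hval]; ring
  have hlb : ∀ x ∈ S, (1 - p) - N ≤ x := by
    rintro x ⟨Λ, hΛ, hΛ', rfl⟩
    rw [hx Λ]
    have := hLB Λ hΛ hΛ'
    linarith
  have hinf : sInf S = (1 - p) - N :=
    le_antisymm (csInf_le ⟨_, hlb⟩ hmem) (le_csInf ⟨_, hmem⟩ hlb)
  rw [hinf, hTN]
  have habs2 : ∑ i, |μ i| = (∑ i, μ i) + 2 * N := by
    rw [hN, Finset.mul_sum, ← Finset.sum_add_distrib]
    refine Finset.sum_congr rfl (fun i _ => ?_)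
    rcases le_or_gt 0 (μ i) with h | h
    · rw [abs_of_nonneg h, max_eq_right (by linarith : -μ i ≤ (0:ℝ))]; ring
    · rw [abs_of_neg h, max_eq_left (by linarith : (0:ℝ) ≤ -μ i)]; ring
  rw [habs2, hSum]
  ring
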